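/- Let σ > 0 and β > 0, and define f : ℂ → ℂ by f(z) := (σ√(2π))^{−1/2}·e^{−z²/(4σ²)}. Then for every real t: |f(t + iβ/4) − f(t − iβ/4)| = 2·e^{β²/(64σ²)}·f(t)·|sin(βt/(8σ²))|, and consequently ( ∫_ℝ |f(t + iβ/4) − f(t − iβ/4)|² dt )^{1/2} ≤ (β/(4σ))·e^{β²/(64σ²)}. -/

import Mathlib

open Matrix MeasureTheory Filter
open scoped ComplexOrder

noncomputable section

/-- The space of `d × d` complex matrices. -/
abbrev Mat (d : ℕ) : Type := Matrix (Fin d) (Fin d) ℂ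

/-- The Gibbs state `ρ_β = exp(-βH)/Tr(exp(-βH))`. -/
def gibbs {d : ℕ} (H : Mat d) (β : ℝ) : Mat d :=
  (Matrix.trace (NormedSpace.exp ((-β : ℂ) • H)))⁻¹ • NormedSpace.exp ((-β : ℂ) • H)

/-- The power `ρ_β^s = exp(-sβH)/Tr(exp(-βH))^s`. -/
def gibbsPow {d : ℕ} (H : Mat d) (β s : ℝ) : Mat d :=
  ((Matrix.trace (NormedSpace.exp ((-β : ℂ) • H))) ^ (s : ℂ))⁻¹ •
    NormedSpace.exp ((-(s * β) : ℂ) • H)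

/-- The Hilbert–Schmidt inner product `⟨A,B⟩₂ = Tr(A† B)`. -/
def hsInner {d : ℕ} (A B : Mat d) : ℂ := Matrix.trace (Aᴴ * B)

/-- The KMS inner product `⟨A,B⟩_{ρ_β} = Tr(A† ρ_β^{1/2} B ρ_β^{1/2})`. -/
def kmsInner {d : ℕ} (H : Mat d) (β : ℝ) (A B : Mat d) : ℂ :=
  Matrix.trace (Aᴴ * gibbsPow H β (1/2) * B * gibbsPow H β (1/2))

/-- The trace norm `‖A‖₁ = Tr √(A†A)`. -/
def traceNorm {d : ℕ} (A : Mat d) : ℝ :=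
  ((open scoped MatrixOrder in CFC.sqrt (Aᴴ * A)).trace).re

/-- The operator (spectral) norm of a matrix. -/
def opNorm {d : ℕ} (A : Mat d) : ℝ :=
  ‖Matrix.toEuclideanCLM (𝕜 := ℂ) A‖

/-- The Frobenius / Hilbert–Schmidt norm `‖A‖₂ = √Tr(A†A)`. -/
def frobNorm {d : ℕ} (A : Mat d) : ℝ :=
  Real.sqrt ((Matrix.trace (Aᴴ * A)).re)

attribute [local instance] Matrix.frobeniusNormedAddCommGroup Matrix.frobeniusNormedSpace

/-- The exponential of a linear endomorphism of matrix space. -/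
def endExp {d : ℕ} (L : Mat d →ₗ[ℂ] Mat d) : Mat d →ₗ[ℂ] Mat d :=
  letI : UniformSpace (Mat d) :=
    (Matrix.frobeniusNormedAddCommGroup : NormedAddCommGroup (Mat d)).toUniformSpace
  letI : TopologicalSpace (Mat d) := UniformSpace.toTopologicalSpace
  (NormedSpace.exp (LinearMap.toContinuousLinearMap L)).toLinearMap

/-- The induced trace norm (1→1 norm) of a linear map on matrices. -/
def oneNorm {d : ℕ} (L : Mat d →ₗ[ℂ] Mat d) : ℝ :=
  ⨆ A : {A : Mat d // traceNorm A = 1}, traceNorm (L A.1)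



lemma integral_sq_mul_exp (b : ℝ) (hb : 0 < b) :
    ∫ x : ℝ, x ^ 2 * Real.exp (-b * x ^ 2) = Real.sqrt (Real.pi / b) / (2 * b) := by
  have hint2 : Integrable fun x : ℝ => x ^ 2 * Real.exp (-b * x ^ 2) := by
    have := integrable_rpow_mul_exp_neg_mul_sq hb (s := 2) (by norm_num)
    simpa [Real.rpow_two] using this
  have hderiv : ∀ x : ℝ, HasDerivAt (fun x : ℝ => x * Real.exp (-b * x ^ 2))
      (Real.exp (-b * x ^ 2) - 2 * b * (x ^ 2 * Real.exp (-b * x ^ 2))) x := by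
    intro x
    have h1 : HasDerivAt (fun x : ℝ => -b * x ^ 2) (-b * (2 * x)) x := by
      simpa using (hasDerivAt_pow 2 x).const_mul (-b)
    have h2 := h1.exp
    have h3 := (hasDerivAt_id x).mul h2
    refine (show HasDerivAt (fun x : ℝ => x * Real.exp (-b * x ^ 2)) _ x from h3).congr_deriv ?_
    simp
    ring
  have h0 := integral_eq_zero_of_hasDerivAt_of_integrable hderiv
    ((integrable_exp_neg_mul_sq hb).sub (hint2.const_mul (2 * b)))
    (integrable_mul_exp_neg_mul_sq hb)
  rw [integral_sub (integrable_exp_neg_mul_sq hb) (hint2.const_mul (2 * b)),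
    MeasureTheory.integral_const_mul, integral_gaussian, sub_eq_zero] at h0
  rw [h0]
  rw [mul_div_cancel_left₀ _ (by positivity : (2 * b) ≠ 0)]

/-- imaginary-shift difference of the Gaussian envelope
`f(z) = (σ√(2π))^{-1/2} e^{-z²/(4σ²)}`: pointwise identity and `L²` bound. -/
theorem stmt_15 (σ β : ℝ) (hσ : 0 < σ) (hβ : 0 < β)
    (f : ℂ → ℂ)
    (hf : ∀ z : ℂ, f z = (((σ * Real.sqrt (2 * Real.pi)) ^ (-(1/2) : ℝ) : ℝ) : ℂ) *
      Complex.exp (-z ^ 2 / (4 * σ ^ 2))) :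
    (∀ t : ℝ,
      ‖f (t + Complex.I * (β / 4)) - f (t - Complex.I * (β / 4))‖ =
        2 * Real.exp (β ^ 2 / (64 * σ ^ 2)) * ‖f t‖ * |Real.sin (β * t / (8 * σ ^ 2))|) ∧
    Real.sqrt (∫ t : ℝ,
        ‖f (t + Complex.I * (β / 4)) - f (t - Complex.I * (β / 4))‖ ^ 2) ≤
      β / (4 * σ) * Real.exp (β ^ 2 / (64 * σ ^ 2)) := by
  have hσc : (σ : ℂ) ≠ 0 := Complex.ofReal_ne_zero.mpr hσ.ne'
  set C : ℝ := (σ * Real.sqrt (2 * Real.pi)) ^ (-(1/2) : ℝ) with hC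
  have hCpos : 0 < C := Real.rpow_pos_of_pos (by positivity) _
  set E : ℝ := Real.exp (β ^ 2 / (64 * σ ^ 2)) with hE
  have hEpos : 0 < E := Real.exp_pos _
  -- norm of f at a real point
  have hft : ∀ t : ℝ, ‖f t‖ = C * Real.exp (-t ^ 2 / (4 * σ ^ 2)) := by
    intro t
    rw [hf]
    have : -(t : ℂ) ^ 2 / (4 * (σ : ℂ) ^ 2) = ((-t ^ 2 / (4 * σ ^ 2) : ℝ) : ℂ) := by
      push_cast; ring
    rw [this, ← Complex.ofReal_exp, ← Complex.ofReal_mul, Complex.norm_real]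
    exact abs_of_pos (by positivity)
  have key : ∀ t : ℝ,
      ‖f (t + Complex.I * (β / 4)) - f (t - Complex.I * (β / 4))‖ =
        2 * E * ‖f t‖ * |Real.sin (β * t / (8 * σ ^ 2))| := by
    intro t
    set v : ℝ := β * t / (8 * σ ^ 2) with hv
    set u : ℝ := (-t ^ 2 + (β / 4) ^ 2) / (4 * σ ^ 2) with hu
    have hA : -((t : ℂ) + Complex.I * (β / 4)) ^ 2 / (4 * (σ : ℂ) ^ 2)
        = (u : ℂ) + -(Complex.I * (v : ℂ)) := by
      rw [hu, hv]
      push_cast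
      linear_combination (-(β : ℂ) ^ 2 / (64 * (σ:ℂ) ^ 2)) * Complex.I_sq
    have hB : -((t : ℂ) - Complex.I * (β / 4)) ^ 2 / (4 * (σ : ℂ) ^ 2)
        = (u : ℂ) + Complex.I * (v : ℂ) := by
      rw [hu, hv]
      push_cast
      linear_combination (-(β : ℂ) ^ 2 / (64 * (σ:ℂ) ^ 2)) * Complex.I_sq
    have hsin : Complex.exp (-(Complex.I * (v : ℂ))) - Complex.exp (Complex.I * (v : ℂ))
        = -2 * Complex.I * ((Real.sin v : ℝ) : ℂ) := by
      rw [show -(Complex.I * (v : ℂ)) = (-(v : ℂ)) * Complex.I by ring,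
        show Complex.I * (v : ℂ) = (v : ℂ) * Complex.I by ring,
        Complex.exp_mul_I, Complex.exp_mul_I, Complex.cos_neg, Complex.sin_neg,
        ← Complex.ofReal_sin]
      ring
    have hfd : f (t + Complex.I * (β / 4)) - f (t - Complex.I * (β / 4))
        = (C : ℂ) * Complex.exp (u : ℂ) * (-2 * Complex.I * ((Real.sin v : ℝ) : ℂ)) := by
      rw [hf, hf, hA, hB, Complex.exp_add, Complex.exp_add, ← hsin]
      ring
    rw [hfd, hft t]
    rw [← Complex.ofReal_exp]
    simp only [norm_mul, Complex.norm_real, Complex.norm_I, Real.norm_eq_abs,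
      norm_neg, Complex.norm_ofNat]
    rw [abs_of_pos hCpos, Real.abs_exp]
    have hu2 : Real.exp u = Real.exp (-t ^ 2 / (4 * σ ^ 2)) * E := by
      rw [hE, ← Real.exp_add]
      congr 1
      rw [hu]; field_simp; ring
    rw [hu2, hv]
    push_cast
    ring
  refine ⟨key, ?_⟩
  -- L² bound
  set b : ℝ := 1 / (2 * σ ^ 2) with hb
  have hbpos : 0 < b := by positivity
  set K : ℝ := (2 * E * C * (β / (8 * σ ^ 2))) ^ 2 with hK
  have hint2 : Integrable fun x : ℝ => x ^ 2 * Real.exp (-b * x ^ 2) := by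
    have := integrable_rpow_mul_exp_neg_mul_sq hbpos (s := 2) (by norm_num)
    simpa [Real.rpow_two] using this
  have hGint : Integrable fun t : ℝ => K * (t ^ 2 * Real.exp (-b * t ^ 2)) :=
    hint2.const_mul K
  have hmono : (∫ t : ℝ, ‖f (t + Complex.I * (β / 4)) - f (t - Complex.I * (β / 4))‖ ^ 2)
      ≤ ∫ t : ℝ, K * (t ^ 2 * Real.exp (-b * t ^ 2)) := by
    apply integral_mono_of_nonneg
    · filter_upwards with t; positivity
    · exact hGint
    · filter_upwards with t
      rw [key t, hft t]
      have h1 : |Real.sin (β * t / (8 * σ ^ 2))| ≤ |β / (8 * σ ^ 2)| * |t| := by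
        have := Real.abs_sin_le_abs (x := β * t / (8 * σ ^ 2))
        calc |Real.sin (β * t / (8 * σ ^ 2))| ≤ |β * t / (8 * σ ^ 2)| := this
          _ = |β / (8 * σ ^ 2)| * |t| := by rw [← abs_mul]; ring_nf
      have h2 : (2 * E * (C * Real.exp (-t ^ 2 / (4 * σ ^ 2))) * |Real.sin (β * t / (8 * σ ^ 2))|) ^ 2
          ≤ (2 * E * (C * Real.exp (-t ^ 2 / (4 * σ ^ 2))) * (|β / (8 * σ ^ 2)| * |t|)) ^ 2 := by
        apply pow_le_pow_left₀ (by positivity)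
        apply mul_le_mul_of_nonneg_left h1 (by positivity)
      refine h2.trans_eq ?_
      have hexp : Real.exp (-t ^ 2 / (4 * σ ^ 2)) ^ 2 = Real.exp (-b * t ^ 2) := by
        rw [← Real.exp_nat_mul, hb]
        congr 1; field_simp; ring
      have habs : |β / (8 * σ ^ 2)| = β / (8 * σ ^ 2) := abs_of_pos (by positivity)
      rw [hK]
      rw [mul_pow, mul_pow, mul_pow, mul_pow, mul_pow, hexp, habs, sq_abs]
      ring
  have hval : (∫ t : ℝ, K * (t ^ 2 * Real.exp (-b * t ^ 2)))
      = (β / (4 * σ) * E) ^ 2 := by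
    rw [MeasureTheory.integral_const_mul, integral_sq_mul_exp b hbpos]
    have h1 : Real.sqrt (Real.pi / b) = Real.sqrt (2 * Real.pi) * σ := by
      rw [show Real.pi / b = 2 * Real.pi * σ ^ 2 by rw [hb]; field_simp,
        Real.sqrt_mul (by positivity), Real.sqrt_sq hσ.le]
    have hC2 : C ^ 2 = (σ * Real.sqrt (2 * Real.pi))⁻¹ := by
      rw [hC, ← Real.rpow_natCast _ 2, ← Real.rpow_mul (by positivity)]
      norm_num [Real.rpow_neg_one]
    have hs : Real.sqrt (2 * Real.pi) ≠ 0 := by positivity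
    rw [h1, hK, hb]
    rw [mul_pow, mul_pow, mul_pow, hC2]
    field_simp
    ring
  calc Real.sqrt (∫ t : ℝ, ‖f (t + Complex.I * (β / 4)) - f (t - Complex.I * (β / 4))‖ ^ 2)
      ≤ Real.sqrt ((β / (4 * σ) * E) ^ 2) := by
        apply Real.sqrt_le_sqrt; rw [← hval]; exact hmono
    _ = β / (4 * σ) * E := Real.sqrt_sq (by positivity)


end
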